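/- The function f(x) = 2 - 2·log_x(2) + 2/(x·ln x) defined for x > 2 attains its minimum at x = -W_{-1}(-ln 2/e)/ln 2, where W_{-1} is the lower branch of the Lambert W function; equivalently, the minimizer x satisfies x = log_2(e·x). -/

import Mathlib

/-- The function `f x = 2 - 2·log_x 2 + 2/(x·ln x)` on `x > 2` attains its minimum at the
point `x₀` characterized by `x₀ = log₂ (e·x₀)` (equivalently `x₀ = -W₋₁(-ln 2 / e)/ln 2`). -/
theorem min_of_competitive_ratio_function :
    ∃ x₀ : ℝ, 2 < x₀ ∧ x₀ = Real.logb 2 (Real.exp 1 * x₀) ∧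
      ∀ x : ℝ, 2 < x →
        2 - 2 * Real.logb x₀ 2 + 2 / (x₀ * Real.log x₀) ≤
          2 - 2 * Real.logb x 2 + 2 / (x * Real.log x) := by
  have hl2 : Real.log 2 < 0.6931471808 := Real.log_two_lt_d9
  have hl2' : (0.6931471803 : ℝ) < Real.log 2 := Real.log_two_gt_d9
  set φ : ℝ → ℝ := fun x => x * Real.log 2 - Real.log x - 1 with hφ
  have hc : ContinuousOn φ (Set.Icc 2 4) := by
    apply ContinuousOn.sub (ContinuousOn.sub
      ((continuous_id.mul continuous_const).continuousOn)
      (Real.continuousOn_log.mono ?_)) continuousOn_const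
    intro x hx
    simp only [Set.mem_compl_iff, Set.mem_singleton_iff]
    have h1 := hx.1
    intro h; rw [h] at h1; linarith
  have hlog4 : Real.log 4 = 2 * Real.log 2 := by
    rw [show (4:ℝ) = 2^2 by norm_num, Real.log_pow]; push_cast; ring
  have h2 : φ 2 < 0 := by
    simp only [hφ]; linarith
  have h4 : 0 ≤ φ 4 := by
    simp only [hφ, hlog4]; linarith
  obtain ⟨x₀, hmem, hzero⟩ :=
    intermediate_value_Icc (by norm_num : (2:ℝ) ≤ 4) hc ⟨le_of_lt h2, h4⟩
  have hx₀2 : 2 < x₀ := by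
    rcases lt_or_eq_of_le hmem.1 with h | h
    · exact h
    · exfalso; rw [← h] at hzero; rw [hzero] at h2; exact lt_irrefl 0 h2
  have hx₀pos : (0:ℝ) < x₀ := by linarith
  have hx₀L : x₀ * Real.log 2 = Real.log x₀ + 1 := by
    have : x₀ * Real.log 2 - Real.log x₀ - 1 = 0 := hzero
    linarith
  have hlogx₀pos : 0 < Real.log x₀ := Real.log_pos (by linarith)
  refine ⟨x₀, hx₀2, ?_, ?_⟩
  · rw [Real.logb, Real.log_mul (Real.exp_ne_zero 1) (by positivity), Real.log_exp]
    rw [show Real.log x₀ = x₀ * Real.log 2 - 1 by linarith]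
    field_simp
    ring
  · intro x hx
    have hx0 : (0:ℝ) < x := by linarith
    have hlx : 0 < Real.log x := Real.log_pos (by linarith)
    have key : x * (Real.log x₀ - Real.log x) ≤ x₀ - x := by
      have h := Real.log_le_sub_one_of_pos (show (0:ℝ) < x₀ / x by positivity)
      rw [Real.log_div (by positivity) (by positivity)] at h
      have hx' : x * (Real.log x₀ - Real.log x) ≤ x * (x₀ / x - 1) := by
        apply mul_le_mul_of_nonneg_left h (le_of_lt hx0)
      calc x * (Real.log x₀ - Real.log x) ≤ x * (x₀ / x - 1) := hx'
        _ = x₀ - x := by field_simp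
    have hthis : x * (x₀ * Real.log 2) = x * (Real.log x₀ + 1) := by rw [hx₀L]
    have hineq : (x * Real.log 2 - 1) * x₀ ≤ x * Real.log x := by nlinarith [key, hthis]
    have hLHS : 2 - 2 * Real.logb x₀ 2 + 2 / (x₀ * Real.log x₀) = 2 - 2 / x₀ := by
      rw [Real.logb, show Real.log x₀ = x₀ * Real.log 2 - 1 by linarith]
      have ha : x₀ * Real.log 2 - 1 ≠ 0 := by
        have : 0 < x₀ * Real.log 2 - 1 := by linarith
        linarith
      have ha' : -1 + x₀ * Real.log 2 ≠ 0 := by intro h; apply ha; linarith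
      field_simp
      have hb : Real.log 2 * x₀ - 1 ≠ 0 := by intro h; apply ha; linarith
      rw [show x₀ * (1 - Real.log 2 / (Real.log 2 * x₀ - 1)) + 1 / (Real.log 2 * x₀ - 1) = x₀ - (Real.log 2 * x₀ - 1) / (Real.log 2 * x₀ - 1) by ring, div_self hb]
    rw [hLHS, Real.logb]
    have hdiff : 2 - 2 * (Real.log 2 / Real.log x) + 2 / (x * Real.log x) - (2 - 2 / x₀)
        = 2 * ((x * Real.log x - (x * Real.log 2 - 1) * x₀) / (x₀ * x * Real.log x)) := by
      field_simp
      ring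
    nlinarith [div_nonneg (show (0:ℝ) ≤ x * Real.log x - (x * Real.log 2 - 1) * x₀ by linarith)
      (show (0:ℝ) ≤ x₀ * x * Real.log x by positivity), hdiff]
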